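/- Let K/F be an extension of fields of characteristic 2, let α ∈ F^×, and let σ be an involution of orthogonal type on M₂(K) such that some nonzero r ∈ Alt(M₂(K),σ) satisfies r² = α·I₂ (i.e. disc σ = αK^{×2}). Then there exist a 2-dimensional K-vector space W, a nondegenerate symmetric bilinear form b on W, and an orthogonal basis {u,v} of (W,b) with b(u,u) = 1 and b(v,v) = α, such that (M₂(K),σ) ≅ (End_K(W), ad_b) as K-algebras with involution. -/

import Mathlib

open Matrix

private lemma skolem_noether_M2 {K : Type} [Field K]
    (σ : Matrix (Fin 2) (Fin 2) K →ₗ[K] Matrix (Fin 2) (Fin 2) K)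
    (hanti : ∀ x y, σ (x * y) = σ y * σ x)
    (hinv : ∀ x, σ (σ x) = x) :
    ∃ u : Matrix (Fin 2) (Fin 2) K, IsUnit u.det ∧ ∀ M, σ M = u * Mᵀ * u⁻¹ := by
  classical
  set E : Fin 2 → Fin 2 → Matrix (Fin 2) (Fin 2) K :=
    fun i j => Matrix.single i j 1 with hE
  have hσinj : ∀ M, σ M = 0 → M = 0 := by
    intro M h
    have := hinv M
    rw [h, map_zero] at this
    exact this.symm
  have hmul : ∀ i j k l : Fin 2, σ (E i j) * σ (E k l) =
      if l = i then σ (E k j) else 0 := by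
    intro i j k l
    rw [← hanti]
    by_cases h : l = i
    · subst h
      rw [if_pos rfl, Matrix.single_mul_single_same, one_mul]
    · rw [if_neg h, Matrix.single_mul_single_of_ne (h := h), map_zero]
  have hene : σ (E 0 0) ≠ 0 := by
    intro h
    have h0 : E (0:Fin 2) 0 = (0 : Matrix (Fin 2) (Fin 2) K) := hσinj _ h
    have := congrFun (congrFun h0 0) 0
    simp [hE, Matrix.single] at this
  have hw0 : ∃ w0 : Fin 2 → K, σ (E 0 0) *ᵥ w0 ≠ 0 := by
    by_contra h
    push_neg at h
    apply hene
    ext i j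
    have := congrFun (h (Pi.single j 1)) i
    simpa [Matrix.mulVec_single] using this
  obtain ⟨w0, hw0⟩ := hw0
  set w : Fin 2 → K := σ (E 0 0) *ᵥ w0 with hw
  have hwne : w ≠ 0 := hw0
  have hew : σ (E 0 0) *ᵥ w = w := by
    have hm : σ (E (0:Fin 2) 0) * σ (E 0 0) = σ (E 0 0) := by simpa using hmul 0 0 0 0
    rw [hw, Matrix.mulVec_mulVec, hm]
  set fw : Fin 2 → K := σ (E 0 1) *ᵥ w with hfw
  have hefw : σ (E 0 0) *ᵥ fw = 0 := by
    rw [hfw, Matrix.mulVec_mulVec]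
    have : σ (E (0:Fin 2) 0) * σ (E 0 1) = 0 := by simpa using hmul 0 0 0 1
    rw [this, Matrix.zero_mulVec]
  have hffw : σ (E 0 1) *ᵥ fw = 0 := by
    rw [hfw, Matrix.mulVec_mulVec]
    have : σ (E (0:Fin 2) 1) * σ (E 0 1) = 0 := by simpa using hmul 0 1 0 1
    rw [this, Matrix.zero_mulVec]
  have hgw : σ (E 1 0) *ᵥ w = 0 := by
    rw [hw, Matrix.mulVec_mulVec]
    have : σ (E (1:Fin 2) 0) * σ (E 0 0) = 0 := by simpa using hmul 1 0 0 0
    rw [this, Matrix.zero_mulVec]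
  have hgfw : σ (E 1 0) *ᵥ fw = w := by
    rw [hfw, Matrix.mulVec_mulVec]
    have : σ (E (1:Fin 2) 0) * σ (E 0 1) = σ (E 0 0) := by simpa using hmul 1 0 0 1
    rw [this]; exact hew
  have hh2w : σ (E 1 1) *ᵥ w = 0 := by
    rw [hw, Matrix.mulVec_mulVec]
    have : σ (E (1:Fin 2) 1) * σ (E 0 0) = 0 := by simpa using hmul 1 1 0 0
    rw [this, Matrix.zero_mulVec]
  have hh2fw : σ (E 1 1) *ᵥ fw = fw := by
    rw [hfw, Matrix.mulVec_mulVec]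
    have : σ (E (1:Fin 2) 1) * σ (E 0 1) = σ (E 0 1) := by simpa using hmul 1 1 0 1
    rw [this]
  -- the matrix u with columns w and fw
  set u : Matrix (Fin 2) (Fin 2) K :=
    Matrix.of (fun i j => if j = 0 then w i else fw i) with hu
  have hucol : ∀ c : Fin 2 → K, u *ᵥ c = c 0 • w + c 1 • fw := by
    intro c
    ext a
    simp [hu, Matrix.mulVec, dotProduct, Fin.sum_univ_two, mul_comm]
  have hcol0 : u *ᵥ Pi.single (0 : Fin 2) 1 = w := by rw [hucol]; simp
  have hcol1 : u *ᵥ Pi.single (1 : Fin 2) 1 = fw := by rw [hucol]; simp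
  -- u is invertible
  have hudet : IsUnit u.det := by
    rw [isUnit_iff_ne_zero, Ne, ← Matrix.exists_mulVec_eq_zero_iff]
    rintro ⟨c, hc, hc0⟩
    rw [hucol] at hc0
    have h1 : c 0 • w = 0 := by
      have := congrArg (fun v => σ (E (0:Fin 2) 0) *ᵥ v) hc0
      simpa [Matrix.mulVec_add, Matrix.mulVec_smul, hew, hefw] using this
    have hc00 : c 0 = 0 := by
      rcases smul_eq_zero.mp h1 with h | h
      · exact h
      · exact absurd h hwne
    have h2' : c 1 • w = 0 := by
      have := congrArg (fun v => σ (E (1:Fin 2) 0) *ᵥ v) hc0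
      simpa [Matrix.mulVec_add, Matrix.mulVec_smul, hgw, hgfw] using this
    have hc11 : c 1 = 0 := by
      rcases smul_eq_zero.mp h2' with h | h
      · exact h
      · exact absurd h hwne
    apply hc
    ext a
    fin_cases a
    · exact hc00
    · exact hc11
  have hcolE : ∀ i j : Fin 2, ∀ c : Fin 2 → K,
      (E i j) *ᵥ c = c j • (Pi.single i 1 : Fin 2 → K) := by
    intro i j c
    ext a
    rw [hE]
    simp only [Matrix.single_mulVec]
    rcases eq_or_ne i a with rfl | h
    · simp [mul_comm]
    · simp [Function.update_of_ne (Ne.symm h), Pi.single_eq_of_ne (Ne.symm h)]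
  have hkeyE : ∀ i j : Fin 2, σ (E j i) * u = u * E i j := by
    intro i j
    have huE : ∀ c : Fin 2 → K, (σ (E j i) * u) *ᵥ c = (u * E i j) *ᵥ c := by
      intro c
      rw [← Matrix.mulVec_mulVec, ← Matrix.mulVec_mulVec, hucol c, hcolE,
        Matrix.mulVec_add, Matrix.mulVec_smul, Matrix.mulVec_smul, Matrix.mulVec_smul]
      fin_cases i <;> fin_cases j <;> simp only [Fin.zero_eta, Fin.mk_one] <;>
        simp [hew, hefw, hgw, hgfw, ← hfw, hffw, hh2w, hh2fw, hcol0, hcol1]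
    ext a b
    have := congrFun (huE (Pi.single b 1)) a
    simpa [Matrix.mulVec_single] using this
  refine ⟨u, hudet, ?_⟩
  intro M
  have hM : M = M 0 0 • E 0 0 + M 0 1 • E 0 1 + M 1 0 • E 1 0 + M 1 1 • E 1 1 := by
    ext a b
    fin_cases a <;> fin_cases b <;>
      simp [hE, Matrix.single, Fin.ext_iff]
  have key : σ M * u = u * Mᵀ := by
    conv_lhs => rw [hM]
    conv_rhs => rw [hM]
    simp only [map_add, _root_.map_smul, Matrix.transpose_add, Matrix.transpose_smul, add_mul,
      Matrix.smul_mul, mul_add, Matrix.mul_smul]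
    have ht : ∀ i j : Fin 2, (E i j)ᵀ = E j i := by
      intro i j
      ext a b
      simp [hE, Matrix.single, and_comm]
    rw [ht, ht, ht, ht, hkeyE 0 0, hkeyE 0 1, hkeyE 1 0, hkeyE 1 1]
  calc σ M = σ M * u * u⁻¹ := by
        rw [Matrix.mul_nonsing_inv_cancel_right _ _ hudet]
    _ = u * Mᵀ * u⁻¹ := by rw [key]

private lemma char2_mul_self_inj {K : Type} [Field K] (h2 : (2:K) = 0) {x y : K}
    (h : x * x = y * y) : x = y := by
  have h0 : (x - y) * (x - y) = 0 := by
    linear_combination h + (y * y - x * y) * h2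
  exact sub_eq_zero.mp (mul_self_eq_zero.mp h0)

private lemma central_scalar {K : Type} [Field K] (c : Matrix (Fin 2) (Fin 2) K)
    (h : ∀ M, c * M = M * c) : c = c 0 0 • (1 : Matrix (Fin 2) (Fin 2) K) := by
  have h00 := h (Matrix.single 0 0 1)
  have h01 := h (Matrix.single 0 1 1)
  have e10 : c 1 0 = 0 := by
    have := congrFun (congrFun h00 1) 0
    simpa [Matrix.mul_apply, Matrix.single, Fin.sum_univ_two] using this
  have e01 : c 0 1 = 0 := by
    have := congrFun (congrFun h00 0) 1
    simpa [Matrix.mul_apply, Matrix.single, Fin.sum_univ_two, eq_comm] using this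
  have ediag : c 0 0 = c 1 1 := by
    have := congrFun (congrFun h01 0) 1
    simpa [Matrix.mul_apply, Matrix.single, Fin.sum_univ_two] using this
  ext a b
  fin_cases a <;> fin_cases b <;>
    simp [Matrix.one_apply, e10, e01, ← ediag]

theorem orthogonal_involution_on_M2_adjoint_to_one_alpha
    (F K : Type) [Field F] [Field K] [Algebra F K] (hF : ringChar F = 2)
    (α : F) (hα : α ≠ 0)
    (σ : Matrix (Fin 2) (Fin 2) K →ₗ[K] Matrix (Fin 2) (Fin 2) K)
    (hanti : ∀ x y, σ (x * y) = σ y * σ x)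
    (hinv : ∀ x, σ (σ x) = x)
    (horth : ¬ ∃ a : Matrix (Fin 2) (Fin 2) K, a - σ a = 1)
    (hdisc : ∃ r : Matrix (Fin 2) (Fin 2) K, r ≠ 0 ∧ (∃ y, y - σ y = r) ∧
      r * r = algebraMap F K α • (1 : Matrix (Fin 2) (Fin 2) K)) :
    ∃ b : LinearMap.BilinForm K (Fin 2 → K),
      (∀ x y, b x y = b y x) ∧
      (∀ x, (∀ y, b x y = 0) → x = 0) ∧
      ∃ u v : Fin 2 → K,
        b u v = 0 ∧ b u u = 1 ∧ b v v = algebraMap F K α ∧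
        Submodule.span K {u, v} = ⊤ ∧
        ∃ f : Matrix (Fin 2) (Fin 2) K ≃ₐ[K] Module.End K (Fin 2 → K),
          ∀ M x y, b x (f M y) = b (f (σ M) x) y := by
  classical
  obtain ⟨u, hudet, hσ⟩ := skolem_noether_M2 σ hanti hinv
  haveI : CharP F 2 := hF ▸ ringChar.charP F
  haveI hK2 : CharP K 2 := charP_of_injective_ringHom (algebraMap F K).injective 2
  have h2K : (2 : K) = 0 := CharTwo.two_eq_zero
  set αK : K := algebraMap F K α with hαKdef
  have hαK0 : αK ≠ 0 := by
    intro h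
    exact hα ((algebraMap F K).injective (by rw [map_zero]; exact h))
  have huinv : u⁻¹ * u = 1 := Matrix.nonsing_inv_mul u hudet
  have huinv' : u * u⁻¹ = 1 := Matrix.mul_nonsing_inv u hudet
  have hudetT : IsUnit uᵀ.det := by rwa [Matrix.det_transpose]
  have hdetu0 : u.det ≠ 0 := by
    intro h; rw [h] at hudet; exact (by simp : ¬ IsUnit (0:K)) hudet
  -- u is symmetric
  have hsymm : uᵀ = u := by
    have hcomm : ∀ M, (u * (uᵀ)⁻¹) * M = M * (u * (uᵀ)⁻¹) := by
      intro M
      have h1 : u * ((uᵀ)⁻¹ * (M * uᵀ) * u⁻¹) = M := by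
        have hM := hinv M
        rw [hσ M, hσ, Matrix.transpose_mul, Matrix.transpose_mul, Matrix.transpose_transpose,
          Matrix.transpose_nonsing_inv, Matrix.mul_assoc] at hM
        exact hM
      conv_rhs => rw [← h1]
      simp only [Matrix.mul_assoc]
      rw [Matrix.nonsing_inv_mul_cancel_left _ _ hudet,
        Matrix.mul_nonsing_inv _ hudetT, Matrix.mul_one]
    have hscalar := central_scalar _ hcomm
    set lam : K := (u * (uᵀ)⁻¹) 0 0 with hlam
    have h5 : u = lam • uᵀ := by
      have := congrArg (fun X => X * uᵀ) hscalar
      rw [Matrix.mul_assoc, Matrix.nonsing_inv_mul _ hudetT, Matrix.mul_one,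
        Matrix.smul_mul, Matrix.one_mul] at this
      exact this
    have h6 : uᵀ = lam • u := by
      have := congrArg Matrix.transpose h5
      rwa [Matrix.transpose_smul, Matrix.transpose_transpose] at this
    have h7 : u = (lam * lam) • u := by
      conv_lhs => rw [h5, h6, smul_smul]
    have hu0 : u ≠ 0 := by
      intro h
      have := congrFun (congrFun huinv' 0) 0
      rw [h] at this
      simp [Matrix.one_apply] at this
    have hz : (1 - lam * lam) • u = 0 := by
      rw [sub_smul, one_smul]; exact sub_eq_zero.mpr h7
    have hll : lam * lam = 1 := by
      rcases smul_eq_zero.mp hz with h | h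
      · exact (sub_eq_zero.mp h).symm
      · exact absurd h hu0
    have hlam1 : lam = 1 := char2_mul_self_inj h2K (by rw [hll, one_mul])
    rw [h6, hlam1, one_smul]
  
  have hqsym : ∀ a b : Fin 2, u a b = u b a := by
    intro a b
    exact (congrFun (congrFun hsymm b) a).symm ▸ rfl
  
  -- σ orthogonal: the diagonal of u is not identically zero
  have hdiag : u 0 0 ≠ 0 ∨ u 1 1 ≠ 0 := by
    by_contra hcon
    push_neg at hcon
    obtain ⟨h00, h11⟩ := hcon
    apply horth
    refine ⟨(u 0 1 • Matrix.single 0 1 1) * u⁻¹, ?_⟩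
    have hσa : σ ((u 0 1 • Matrix.single 0 1 1) * u⁻¹)
        = (u 0 1 • Matrix.single 1 0 1) * u⁻¹ := by
      rw [hσ, Matrix.transpose_mul, Matrix.transpose_nonsing_inv, hsymm,
        Matrix.transpose_smul]
      have hT : (Matrix.single (0:Fin 2) (1:Fin 2) (1:K))ᵀ
          = Matrix.single 1 0 1 := by
        ext a b
        simp [Matrix.single, and_comm]
      rw [hT, ← Matrix.mul_assoc u u⁻¹ _, huinv', Matrix.one_mul]
    rw [hσa, ← sub_mul]
    have hkey : u 0 1 • Matrix.single (0:Fin 2) (1:Fin 2) (1:K)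
        - u 0 1 • Matrix.single 1 0 1 = u := by
      ext a b
      fin_cases a <;> fin_cases b <;>
        simp [Matrix.single, h00, h11]
      · exact CharTwo.neg_eq _ |>.trans (hqsym 0 1) |>.symm ▸ rfl
    rw [hkey, huinv']
  
  -- discriminant datum
  obtain ⟨r, hrne, ⟨y, hy⟩, hr2⟩ := hdisc
  set s : Matrix (Fin 2) (Fin 2) K := r * u with hsdef
  have hs : s = y * u - u * yᵀ := by
    rw [hsdef, ← hy, sub_mul, hσ y, Matrix.mul_assoc (u * yᵀ) u⁻¹ u, huinv, Matrix.mul_one]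
  have hsT : sᵀ = -s := by
    rw [hs, Matrix.transpose_sub, Matrix.transpose_mul, Matrix.transpose_mul,
      Matrix.transpose_transpose, hsymm, neg_sub]
  have hs00 : s 0 0 = 0 := by
    rw [hs]
    simp only [Matrix.sub_apply, Matrix.mul_apply, Matrix.transpose_apply, Fin.sum_univ_two]
    linear_combination (y 0 1) * (hqsym 1 0)
  have hs11 : s 1 1 = 0 := by
    rw [hs]
    simp only [Matrix.sub_apply, Matrix.mul_apply, Matrix.transpose_apply, Fin.sum_univ_two]
    linear_combination (y 1 0) * (hqsym 0 1)
  have hs10 : s 1 0 = s 0 1 := by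
    have h := congrFun (congrFun hsT 0) 1
    simp only [Matrix.transpose_apply, Matrix.neg_apply] at h
    rw [h, CharTwo.neg_eq]
  set t : K := s 0 1 with htdef
  have hrdet : r.det = αK := by
    refine char2_mul_self_inj h2K ?_
    have : (r * r).det = (αK • (1 : Matrix (Fin 2) (Fin 2) K)).det := by rw [hr2]
    rw [Matrix.det_mul] at this
    rw [this, Matrix.det_smul, Matrix.det_one]
    simp [Fintype.card_fin, sq]
  have ht2 : t * t = αK * u.det := by
    have hds : s.det = αK * u.det := by
      rw [hsdef, Matrix.det_mul, hrdet]
    rw [Matrix.det_fin_two, hs00, hs11, hs10] at hds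
    calc t * t = -(0 * 0 - s 0 1 * s 0 1) := by ring
    _ = -(αK * u.det) := by rw [hds]
    _ = αK * u.det := CharTwo.neg_eq _
  have ht0 : t ≠ 0 := by
    intro h
    rw [h, zero_mul] at ht2
    exact (mul_ne_zero hαK0 hdetu0) ht2.symm
  
  -- choose a diagonal index where u is nonzero
  obtain ⟨i, j, hp, hdetij, hsum⟩ :
      ∃ i j : Fin 2, u i i ≠ 0 ∧ u.det = u i i * u j j - u i j * u j i ∧
        ∀ c : Fin 2 → K, u *ᵥ c
          = c i • (u *ᵥ Pi.single i 1) + c j • (u *ᵥ Pi.single j 1) := by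
    rcases hdiag with h | h
    · refine ⟨0, 1, h, Matrix.det_fin_two u, fun c => ?_⟩
      ext a
      simp [Matrix.mulVec_single, Matrix.mulVec, dotProduct, Fin.sum_univ_two]
      ring
    · refine ⟨1, 0, h, by rw [Matrix.det_fin_two]; ring, fun c => ?_⟩
      ext a
      simp [Matrix.mulVec_single, Matrix.mulVec, dotProduct, Fin.sum_univ_two]
      ring
  set p : K := u i i with hpdef
  set q : K := u i j with hqdef
  set G : Matrix (Fin 2) (Fin 2) K := p⁻¹ • u⁻¹ with hGdef
  set b : LinearMap.BilinForm K (Fin 2 → K) := Matrix.toBilin' G with hbdefn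
  have hbdef : ∀ x z : Fin 2 → K, b x z = x ⬝ᵥ (G *ᵥ z) := by
    intro x z
    rw [hbdefn]
    exact Matrix.toBilin'_apply' G x z
  have hGucol : ∀ l : Fin 2, G *ᵥ (u *ᵥ Pi.single l 1) = p⁻¹ • (Pi.single l 1 : Fin 2 → K) := by
    intro l
    rw [hGdef, Matrix.smul_mulVec, Matrix.mulVec_mulVec, huinv, Matrix.one_mulVec]
  have hbcol : ∀ k l : Fin 2,
      b (u *ᵥ Pi.single k 1) (u *ᵥ Pi.single l 1) = p⁻¹ * u k l := by
    intro k l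
    rw [hbdef, hGucol, ← Pi.single_smul]
    rw [dotProduct_single]
    simp [Matrix.mulVec_single, smul_eq_mul]
    rw [hqsym l k]
    ring
  
  set w1 : Fin 2 → K := u *ᵥ Pi.single i 1 with hw1def
  set cJ : Fin 2 → K := u *ᵥ Pi.single j 1 with hcJdef
  set w2 : Fin 2 → K := (αK * t⁻¹) • (p • cJ - q • w1) with hw2def
  have hb11 : b w1 w1 = 1 := by
    rw [hw1def, hbcol i i, ← hpdef, inv_mul_cancel₀ hp]
  have hb1J : b w1 cJ = p⁻¹ * q := by
    rw [hw1def, hcJdef, hbcol i j, ← hqdef]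
  have hbJ1 : b cJ w1 = p⁻¹ * q := by
    rw [hw1def, hcJdef, hbcol j i, hqsym j i, ← hqdef]
  have hbJJ : b cJ cJ = p⁻¹ * u j j := by
    rw [hcJdef, hbcol j j]
  -- orthogonality
  have hb12 : b w1 w2 = 0 := by
    simp only [hw2def, map_sub, _root_.map_smul, LinearMap.sub_apply, LinearMap.smul_apply,
      smul_eq_mul, hb1J, hb11]
    field_simp
    ring
  -- the second basis vector has length αK
  have hb22 : b w2 w2 = αK := by
    simp only [hw2def, map_sub, _root_.map_smul, LinearMap.sub_apply, LinearMap.smul_apply,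
      smul_eq_mul, hbJJ, hbJ1, hb1J, hb11]
    have hdet' : u.det = p * u j j - q * q := by
      rw [hdetij, hqsym j i]
    field_simp [hp, ht0, hαK0]
    linear_combination (-1) * ht2 + (-αK) * hdet'
  
  -- symmetry of b
  have hGsym : Gᵀ = G := by
    rw [hGdef, Matrix.transpose_smul, Matrix.transpose_nonsing_inv, hsymm]
  have hG01 : G 1 0 = G 0 1 := (congrFun (congrFun hGsym 0) 1).symm ▸ rfl
  have hbsymm : ∀ x z : Fin 2 → K, b x z = b z x := by
    intro x z
    rw [hbdef, hbdef]
    simp only [dotProduct, Matrix.mulVec, Fin.sum_univ_two]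
    linear_combination (x 1 * z 0 - x 0 * z 1) * hG01
  -- nondegeneracy
  have hbnd : ∀ x : Fin 2 → K, (∀ z, b x z = 0) → x = 0 := by
    intro x hx
    funext a
    have h := hx (p • (u *ᵥ Pi.single a 1))
    rw [hbdef, Matrix.mulVec_smul, hGucol, smul_smul, mul_inv_cancel₀ hp, one_smul,
      dotProduct_single, mul_one] at h
    exact h
  -- span
  have hw1S : w1 ∈ Submodule.span K {w1, w2} :=
    Submodule.subset_span (Set.mem_insert _ _)
  have hw2S : w2 ∈ Submodule.span K {w1, w2} :=
    Submodule.subset_span (Set.mem_insert_of_mem _ rfl)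
  have hcJS : cJ ∈ Submodule.span K {w1, w2} := by
    have hcJ : cJ = p⁻¹ • ((t * αK⁻¹) • w2 + q • w1) := by
      rw [hw2def]
      funext a
      simp only [Pi.smul_apply, Pi.add_apply, Pi.sub_apply, smul_eq_mul]
      field_simp
      ring
    rw [hcJ]
    exact Submodule.smul_mem _ _ (Submodule.add_mem _
      (Submodule.smul_mem _ _ hw2S) (Submodule.smul_mem _ _ hw1S))
  have hspan : Submodule.span K {w1, w2} = ⊤ := by
    rw [eq_top_iff]
    rintro x -
    have hxrep : x = (u⁻¹ *ᵥ x) i • w1 + (u⁻¹ *ᵥ x) j • cJ := by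
      conv_lhs => rw [show x = u *ᵥ (u⁻¹ *ᵥ x) by
        rw [Matrix.mulVec_mulVec, huinv', Matrix.one_mulVec]]
      exact hsum (u⁻¹ *ᵥ x)
    rw [hxrep]
    exact Submodule.add_mem _ (Submodule.smul_mem _ _ hw1S) (Submodule.smul_mem _ _ hcJS)
  -- the algebra isomorphism and the adjoint property
  have hadj : ∀ M : Matrix (Fin 2) (Fin 2) K, G * M = (σ M)ᵀ * G := by
    intro M
    rw [hσ M, Matrix.transpose_mul, Matrix.transpose_mul, Matrix.transpose_transpose,
      Matrix.transpose_nonsing_inv, hsymm, hGdef]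
    rw [Matrix.mul_smul, Matrix.smul_mul]
    congr 1
    rw [Matrix.mul_assoc, Matrix.mul_assoc, huinv', Matrix.mul_one]
  have hswap : ∀ (A : Matrix (Fin 2) (Fin 2) K) (x z : Fin 2 → K),
      (A *ᵥ x) ⬝ᵥ z = x ⬝ᵥ (Aᵀ *ᵥ z) := by
    intro A x z
    simp only [dotProduct, Matrix.mulVec, Matrix.transpose_apply, Fin.sum_univ_two]
    ring
  refine ⟨b, hbsymm, hbnd, w1, w2, hb12, hb11, hb22, hspan, Matrix.toLinAlgEquiv', ?_⟩
  intro M x z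
  have hfM : ∀ (N : Matrix (Fin 2) (Fin 2) K) (v : Fin 2 → K),
      Matrix.toLinAlgEquiv' N v = N *ᵥ v := fun _ _ => rfl
  rw [hfM, hfM, hbdef, hbdef, hswap (σ M) x (G *ᵥ z), Matrix.mulVec_mulVec,
    Matrix.mulVec_mulVec, ← hadj]
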